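/- arXiv:1805.11430 — 3 statements merged into one kernel-verified Lean document; each statement's English description precedes it below -/
import Mathlib

section
/- If h_γ is the T-invariant function associated to a solution γ of Mγ = 0 and z_ℓ ∈ I_ℓ, then the right limit lim_{x↓z_ℓ} h_γ(x) equals γ_ℓ. In particular, the map γ ↦ h_γ from the null space of M to L¹ is injective. -/
open Set

noncomputable section

/-- `T_ω = T_{ω_t} ∘ ⋯ ∘ T_{ω_1}` (head of the list applied first). -/
def rwordApply (T : ℕ → ℝ → ℝ) : List ℕ → ℝ → ℝ
  | [], y => y
  | j :: ω, y => rwordApply T ω (T j y)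

/-- the weighted slope product `δ_ω(y,|ω|)`; `ι x` is the index of the
partition interval containing `x`. -/
def rdelta (p : ℕ → ℝ) (k : ℕ → ℕ → ℝ) (ι : ℝ → ℕ) (T : ℕ → ℝ → ℝ) :
    List ℕ → ℝ → ℝ
  | [], _ => 1
  | j :: ω, y => p j / k (ι y) j * rdelta p k ι T ω (T j y)

/-- the random piecewise linear map with slopes `k`, intercepts `d`. -/
def Tpl (k d : ℕ → ℕ → ℝ) (ι : ℝ → ℕ) (j : ℕ) (x : ℝ) : ℝ :=
  k (ι x) j * x + d (ι x) j

/-- finite words with letters in `Ωs`. -/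
def Words (Ωs : Set ℕ) : Type := {ω : List ℕ // ∀ j ∈ ω, j ∈ Ωs}

/-- `KI_n(y) = Σ_{t≥1} Σ_{ω ∈ Ωᵗ} δ_ω(y,t)·1_{I_n}(T_{ω₁^{t-1}}(y))`. -/
def KI (Ωs : Set ℕ) (p : ℕ → ℝ) (k : ℕ → ℕ → ℝ) (ι : ℝ → ℕ) (T : ℕ → ℝ → ℝ)
    (n : ℕ) (y : ℝ) : ℝ :=
  ∑' ω : {ω : List ℕ // (∀ j ∈ ω, j ∈ Ωs) ∧ ω ≠ []},
    if ι (rwordApply T ω.1.dropLast y) = n then rdelta p k ι T ω.1 y else 0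

/-- `KA_i(y) = Σ_{t≥0} Σ_{ω ∈ Ωᵗ} δ_ω(y,t)·1_{I_1 ∪ ⋯ ∪ I_i}(T_ω(y))`. -/
def KA (Ωs : Set ℕ) (p : ℕ → ℝ) (k : ℕ → ℕ → ℝ) (ι : ℝ → ℕ) (T : ℕ → ℝ → ℝ)
    (i : ℕ) (y : ℝ) : ℝ :=
  ∑' ω : Words Ωs,
    if ι (rwordApply T ω.1 y) ≤ i then rdelta p k ι T ω.1 y else 0

/-- `KB_i(y) = Σ_{t≥0} Σ_{ω ∈ Ωᵗ} δ_ω(y,t)·1_{I_{i+1} ∪ ⋯ ∪ I_N}(T_ω(y))`. -/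
def KB (Ωs : Set ℕ) (p : ℕ → ℝ) (k : ℕ → ℕ → ℝ) (ι : ℝ → ℕ) (T : ℕ → ℝ → ℝ)
    (i : ℕ) (y : ℝ) : ℝ :=
  ∑' ω : Words Ωs,
    if i < ι (rwordApply T ω.1 y) then rdelta p k ι T ω.1 y else 0

/-- `S_n = Σ_{j∈Ω} p_j / k_{n,j}`, the average inverse slope on `I_n`. -/
def Sav (Ωs : Set ℕ) (p : ℕ → ℝ) (k : ℕ → ℕ → ℝ) (n : ℕ) : ℝ :=
  ∑' j : Ωs, p j.1 / k n j.1

/-- `a_{i,j} = k_{i,j} z_i + d_{i,j}`, the left limit of `T_j` at `z_i`. -/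
def aPt (k d : ℕ → ℕ → ℝ) (z : ℕ → ℝ) (i j : ℕ) : ℝ := k i j * z i + d i j

/-- `b_{i,j} = k_{i+1,j} z_i + d_{i+1,j}`, the right limit of `T_j` at `z_i`. -/
def bPt (k d : ℕ → ℕ → ℝ) (z : ℕ → ℝ) (i j : ℕ) : ℝ := k (i + 1) j * z i + d (i + 1) j

/-- the entries `μ_{n,i}` of the fundamental matrix (Definition 3.2). -/
def fundM (Ωs : Set ℕ) (p : ℕ → ℝ) (k d : ℕ → ℕ → ℝ) (ι : ℝ → ℕ) (z : ℕ → ℝ)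
    (n i : ℕ) : ℝ :=
  ∑' j : Ωs,
    ((if n = i then p j.1 / k i j.1 else 0) -
      (if n = i + 1 then p j.1 / k (i + 1) j.1 else 0) +
      (p j.1 / k i j.1 * KI Ωs p k ι (Tpl k d ι) n (aPt k d z i j.1) -
        p j.1 / k (i + 1) j.1 * KI Ωs p k ι (Tpl k d ι) n (bPt k d z i j.1)))

/-- `L_y(x) = Σ_{t≥0} Σ_{ω∈Ωᵗ} δ_ω(y,t)·1_{[0,T_ω(y))}(x)`. -/
def Lfun (Ωs : Set ℕ) (p : ℕ → ℝ) (k : ℕ → ℕ → ℝ) (ι : ℝ → ℕ) (T : ℕ → ℝ → ℝ)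
    (y x : ℝ) : ℝ :=
  ∑' ω : Words Ωs,
    if x ∈ Ico (0:ℝ) (rwordApply T ω.1 y) then rdelta p k ι T ω.1 y else 0

/-- `h_γ(x) = Σ_{m=1}^{N−1} γ_m Σ_{ℓ∈Ω} [(p_ℓ/k_{m,ℓ}) L_{a_{m,ℓ}}(x) −
(p_ℓ/k_{m+1,ℓ}) L_{b_{m,ℓ}}(x)]`. -/
def hFun (Ωs : Set ℕ) (N : ℕ) (p : ℕ → ℝ) (k d : ℕ → ℕ → ℝ) (ι : ℝ → ℕ) (z : ℕ → ℝ)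
    (γ : ℕ → ℝ) (x : ℝ) : ℝ :=
  ∑ m ∈ Finset.Icc 1 (N - 1), γ m *
    ∑' j : Ωs,
      (p j.1 / k m j.1 * Lfun Ωs p k ι (Tpl k d ι) (aPt k d z m j.1) x -
        p j.1 / k (m + 1) j.1 * Lfun Ωs p k ι (Tpl k d ι) (bPt k d z m j.1) x)


section Aux

open Filter Topology

/-! ### Basic lemmas about words -/

theorem rwordApply_append (T : ℕ → ℝ → ℝ) :
    ∀ (ω l : List ℕ) (y : ℝ),
      rwordApply T (ω ++ l) y = rwordApply T l (rwordApply T ω y)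
  | [], l, y => rfl
  | j :: ω, l, y => by
      simp only [List.cons_append, rwordApply]
      exact rwordApply_append T ω l (T j y)

theorem rdelta_concat (p : ℕ → ℝ) (k : ℕ → ℕ → ℝ) (ι : ℝ → ℕ) (T : ℕ → ℝ → ℝ) :
    ∀ (ω : List ℕ) (j : ℕ) (y : ℝ),
      rdelta p k ι T (ω ++ [j]) y
        = rdelta p k ι T ω y * (p j / k (ι (rwordApply T ω y)) j)
  | [], j, y => by simp [rdelta, rwordApply]
  | i :: ω, j, y => by
      simp only [List.cons_append, rdelta, rwordApply]
      rw [rdelta_concat p k ι T ω j (T i y)]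
      ring

theorem rword_mem_Icc {Ωs : Set ℕ} {T : ℕ → ℝ → ℝ}
    (hT : ∀ j ∈ Ωs, ∀ x ∈ Icc (0:ℝ) 1, T j x ∈ Icc (0:ℝ) 1) :
    ∀ (ω : List ℕ), (∀ j ∈ ω, j ∈ Ωs) → ∀ y ∈ Icc (0:ℝ) 1,
      rwordApply T ω y ∈ Icc (0:ℝ) 1
  | [], _, y, hy => hy
  | j :: ω, hω, y, hy => by
      simp only [rwordApply]
      exact rword_mem_Icc hT ω (fun i hi => hω i (List.mem_cons_of_mem _ hi))
        (T j y) (hT j (hω j (List.mem_cons_self)) y hy)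

/-- the absolute-value weight of a word -/
def rdeltaA (p : ℕ → ℝ) (k : ℕ → ℕ → ℝ) (ι : ℝ → ℕ) (T : ℕ → ℝ → ℝ) :
    List ℕ → ℝ → ℝ :=
  rdelta p (fun n j => |k n j|) ι T

theorem abs_rdelta {Ωs : Set ℕ} {p : ℕ → ℝ} (hp : ∀ j ∈ Ωs, 0 < p j)
    (k : ℕ → ℕ → ℝ) (ι : ℝ → ℕ) (T : ℕ → ℝ → ℝ) :
    ∀ (ω : List ℕ), (∀ j ∈ ω, j ∈ Ωs) → ∀ y : ℝ,
      |rdelta p k ι T ω y| = rdeltaA p k ι T ω y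
  | [], _, y => by simp [rdelta, rdeltaA]
  | j :: ω, hω, y => by
      simp only [rdelta, rdeltaA, abs_mul, abs_div]
      rw [abs_of_pos (hp j (hω j (List.mem_cons_self)))]
      rw [show |rdelta p k ι T ω (T j y)|
          = rdeltaA p k ι T ω (T j y) from
        abs_rdelta hp k ι T ω (fun i hi => hω i (List.mem_cons_of_mem _ hi)) (T j y)]
      rfl

theorem rdeltaA_nonneg {Ωs : Set ℕ} {p : ℕ → ℝ} (hp : ∀ j ∈ Ωs, 0 < p j)
    (k : ℕ → ℕ → ℝ) (ι : ℝ → ℕ) (T : ℕ → ℝ → ℝ)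
    (ω : List ℕ) (hω : ∀ j ∈ ω, j ∈ Ωs) (y : ℝ) :
    0 ≤ rdeltaA p k ι T ω y := by
  rw [← abs_rdelta hp k ι T ω hω y]; exact abs_nonneg _

open Classical in
/-- domination function for all word sums -/
def FB (Ωs : Set ℕ) (p : ℕ → ℝ) (k : ℕ → ℕ → ℝ) (ι : ℝ → ℕ) (T : ℕ → ℝ → ℝ)
    (y : ℝ) (ω : List ℕ) : ℝ :=
  if ∀ j ∈ ω, j ∈ Ωs then rdeltaA p k ι T ω y else 0

theorem FB_nonneg {Ωs : Set ℕ} {p : ℕ → ℝ} (hp : ∀ j ∈ Ωs, 0 < p j)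
    (k : ℕ → ℕ → ℝ) (ι : ℝ → ℕ) (T : ℕ → ℝ → ℝ) (y : ℝ) (ω : List ℕ) :
    0 ≤ FB Ωs p k ι T y ω := by
  unfold FB; split
  · exact rdeltaA_nonneg hp k ι T ω ‹_› y
  · exact le_rfl

/-- context of standing assumptions -/
structure Ctx (Ωs : Set ℕ) (N : ℕ) (p : ℕ → ℝ) (ρ : ℝ) (k : ℕ → ℕ → ℝ)
    (ι : ℝ → ℕ) (T : ℕ → ℝ → ℝ) : Prop where
  hρ0 : 0 < ρ
  hρ1 : ρ < 1
  hp : ∀ j ∈ Ωs, 0 < p j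
  hι : ∀ x ∈ Icc (0:ℝ) 1, ι x ∈ Finset.Icc 1 N
  hT : ∀ j ∈ Ωs, ∀ x ∈ Icc (0:ℝ) 1, T j x ∈ Icc (0:ℝ) 1
  hA2 : ∀ n ∈ Finset.Icc 1 N,
    Summable (fun j : Ωs => p j.1 / |k n j.1|) ∧
      ∑' j : Ωs, p j.1 / |k n j.1| ≤ ρ

namespace Ctx

variable {Ωs : Set ℕ} {N : ℕ} {p : ℕ → ℝ} {ρ : ℝ} {k : ℕ → ℕ → ℝ}
  {ι : ℝ → ℕ} {T : ℕ → ℝ → ℝ}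

theorem h1ρ (hc : Ctx Ωs N p ρ k ι T) : 0 < 1 - ρ := by
  have := hc.hρ1; linarith

theorem one_le_C (hc : Ctx Ωs N p ρ k ι T) : 1 ≤ (1 - ρ)⁻¹ := by
  rw [le_inv_comm₀ one_pos hc.h1ρ]
  have := hc.hρ0; linarith

end Ctx

/-- the head/tail equivalence -/
def consEquiv : ℕ × List ℕ ≃ {ω : List ℕ // ω ≠ []} where
  toFun jp := ⟨jp.1 :: jp.2, by simp⟩
  invFun ω := (ω.1.head ω.2, ω.1.tail)
  left_inv := by rintro ⟨j, ω⟩; simp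
  right_inv := by
    rintro ⟨ω, h⟩
    exact Subtype.ext (List.cons_head_tail h)

theorem tsum_list_cons (g : List ℕ → ENNReal) :
    ∑' ω : List ℕ, g ω = g [] + ∑' jp : ℕ × List ℕ, g (jp.1 :: jp.2) := by
  rw [ENNReal.tsum_eq_add_tsum_ite ([] : List ℕ)]
  congr 1
  rw [tsum_congr (g := ({ω : List ℕ | ω ≠ []}).indicator g)
      (fun x => by by_cases h : x = [] <;> simp [Set.indicator, h]),
    ← tsum_subtype]
  exact (consEquiv.tsum_eq (fun ω : {ω : List ℕ // ω ≠ []} => g ω.1)).symm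

/-- appending a last letter -/
def concatEquiv (Ωs : Set ℕ) :
    Words Ωs × Ωs ≃ {ω : List ℕ // (∀ j ∈ ω, j ∈ Ωs) ∧ ω ≠ []} where
  toFun x := ⟨x.1.1 ++ [x.2.1],
    ⟨fun i hi => by
      rcases List.mem_append.1 hi with h | h
      · exact x.1.2 i h
      · rw [List.mem_singleton.1 h]; exact x.2.2,
     by simp⟩⟩
  invFun ω :=
    (⟨ω.1.dropLast, fun i hi => ω.2.1 i ((List.dropLast_sublist ω.1).subset hi)⟩,
     ⟨ω.1.getLast ω.2.2, ω.2.1 _ (List.getLast_mem ω.2.2)⟩)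
  left_inv := by
    rintro ⟨⟨ω, hω⟩, ⟨j, hj⟩⟩
    refine Prod.ext (Subtype.ext ?_) (Subtype.ext ?_)
    · exact List.dropLast_concat
    · exact List.getLast_concat
  right_inv := by
    rintro ⟨ω, hω, hne⟩
    exact Subtype.ext (List.dropLast_append_getLast hne)


namespace Ctx

variable {Ωs : Set ℕ} {N : ℕ} {p : ℕ → ℝ} {ρ : ℝ} {k : ℕ → ℕ → ℝ}
  {ι : ℝ → ℕ} {T : ℕ → ℝ → ℝ}

open Classical in
theorem tsum_slice_le (hc : Ctx Ωs N p ρ k ι T) {y : ℝ} (hy : y ∈ Icc (0:ℝ) 1) :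
    ∑' j : ℕ, (if j ∈ Ωs then ENNReal.ofReal (p j / |k (ι y) j|) else 0)
      ≤ ENNReal.ofReal ρ := by
  have hn : ι y ∈ Finset.Icc 1 N := hc.hι y hy
  have h1 : ∑' j : ℕ, (if j ∈ Ωs then ENNReal.ofReal (p j / |k (ι y) j|) else 0)
      = ∑' j : Ωs, ENNReal.ofReal (p j.1 / |k (ι y) j.1|) := by
    rw [tsum_subtype Ωs (fun j => ENNReal.ofReal (p j / |k (ι y) j|))]
    exact tsum_congr fun j => by by_cases h : j ∈ Ωs <;> simp [Set.indicator, h]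
  rw [h1, ← ENNReal.ofReal_tsum_of_nonneg
      (fun j => div_nonneg (hc.hp _ j.2).le (abs_nonneg _)) (hc.hA2 _ hn).1]
  exact ENNReal.ofReal_le_ofReal (hc.hA2 _ hn).2

open Classical in
theorem cut_bound (hc : Ctx Ωs N p ρ k ι T) :
    ∀ (n : ℕ), ∀ y ∈ Icc (0:ℝ) 1,
      (∑' ω : List ℕ,
        (if ω.length ≤ n then ENNReal.ofReal (FB Ωs p k ι T y ω) else 0))
        ≤ ENNReal.ofReal (1 - ρ)⁻¹ := by
  intro n
  induction n with
  | zero =>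
    intro y hy
    rw [tsum_list_cons]
    have h0 : ∀ jp : ℕ × List ℕ,
        (if (jp.1 :: jp.2).length ≤ 0 then
          ENNReal.ofReal (FB Ωs p k ι T y (jp.1 :: jp.2)) else 0) = 0 := by
      intro jp; simp
    rw [tsum_congr h0, tsum_zero, add_zero, if_pos (by simp)]
    have : FB Ωs p k ι T y [] = 1 := by simp [FB, rdeltaA, rdelta]
    rw [this]
    exact ENNReal.ofReal_le_ofReal hc.one_le_C
  | succ n IH =>
    intro y hy
    set c : ℕ → ENNReal :=
      fun j => if j ∈ Ωs then ENNReal.ofReal (p j / |k (ι y) j|) else 0 with hcdef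
    have key : ∀ jp : ℕ × List ℕ,
        (if (jp.1 :: jp.2).length ≤ n + 1 then
          ENNReal.ofReal (FB Ωs p k ι T y (jp.1 :: jp.2)) else 0)
        = c jp.1 * (if jp.2.length ≤ n then
            ENNReal.ofReal (FB Ωs p k ι T (T jp.1 y) jp.2) else 0) := by
      rintro ⟨j, ω⟩
      simp only [List.length_cons, Nat.add_le_add_iff_right, hcdef]
      by_cases hl : ω.length ≤ n
      · rw [if_pos hl, if_pos hl]
        by_cases hj : j ∈ Ωs
        · rw [if_pos hj]
          by_cases hω : ∀ i ∈ ω, i ∈ Ωs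
          · have hfb1 : FB Ωs p k ι T y (j :: ω)
                = p j / |k (ι y) j| * rdeltaA p k ι T ω (T j y) := by
              rw [FB, if_pos (by
                intro i hi
                rcases List.mem_cons.1 hi with h | h
                · exact h ▸ hj
                · exact hω i h)]
              rfl
            have hfb2 : FB Ωs p k ι T (T j y) ω = rdeltaA p k ι T ω (T j y) := by
              rw [FB, if_pos hω]
            rw [hfb1, hfb2,
              ENNReal.ofReal_mul (div_nonneg (hc.hp _ hj).le (abs_nonneg _))]
          · have hfb1 : FB Ωs p k ι T y (j :: ω) = 0 := by
              rw [FB, if_neg (by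
                intro hall
                exact hω fun i hi => hall i (List.mem_cons_of_mem _ hi))]
            have hfb2 : FB Ωs p k ι T (T j y) ω = 0 := by rw [FB, if_neg hω]
            rw [hfb1, hfb2]; simp
        · rw [if_neg hj, zero_mul]
          have : FB Ωs p k ι T y (j :: ω) = 0 := by
            rw [FB, if_neg (by
              intro hall
              exact hj (hall j (List.mem_cons_self)))]
          rw [this]; simp
      · rw [if_neg hl, if_neg hl, mul_zero]
    calc ∑' ω : List ℕ,
          (if ω.length ≤ n + 1 then ENNReal.ofReal (FB Ωs p k ι T y ω) else 0)
        = (if ([] : List ℕ).length ≤ n + 1 then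
            ENNReal.ofReal (FB Ωs p k ι T y []) else 0)
          + ∑' jp : ℕ × List ℕ,
              (if (jp.1 :: jp.2).length ≤ n + 1 then
                ENNReal.ofReal (FB Ωs p k ι T y (jp.1 :: jp.2)) else 0) :=
          tsum_list_cons _
      _ = 1 + ∑' j : ℕ, c j * ∑' ω : List ℕ,
            (if ω.length ≤ n then
              ENNReal.ofReal (FB Ωs p k ι T (T j y) ω) else 0) := by
          rw [if_pos (by simp), show FB Ωs p k ι T y [] = 1 by
            simp [FB, rdeltaA, rdelta], ENNReal.ofReal_one, tsum_congr key,
            ENNReal.tsum_prod']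
          congr 1
          refine tsum_congr fun j => ?_
          show ∑' ω : List ℕ, c j * (if ω.length ≤ n then
              ENNReal.ofReal (FB Ωs p k ι T (T j y) ω) else 0) = _
          exact ENNReal.tsum_mul_left
      _ ≤ 1 + ∑' j : ℕ, c j * ENNReal.ofReal (1 - ρ)⁻¹ := by
          refine add_le_add_right (ENNReal.tsum_le_tsum fun j => ?_) 1
          by_cases hj : j ∈ Ωs
          · exact mul_le_mul_right (IH (T j y) (hc.hT j hj y hy)) _
          · simp [hcdef, hj]
      _ = 1 + (∑' j : ℕ, c j) * ENNReal.ofReal (1 - ρ)⁻¹ := by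
          rw [ENNReal.tsum_mul_right]
      _ ≤ 1 + ENNReal.ofReal ρ * ENNReal.ofReal (1 - ρ)⁻¹ := by
          exact add_le_add_right (mul_le_mul_left (hc.tsum_slice_le hy) _) 1
      _ = ENNReal.ofReal (1 - ρ)⁻¹ := by
          rw [← ENNReal.ofReal_mul hc.hρ0.le, ← ENNReal.ofReal_one,
            ← ENNReal.ofReal_add (by norm_num)
              (mul_nonneg hc.hρ0.le (inv_nonneg.2 hc.h1ρ.le))]
          have h1 : (1:ℝ) - ρ ≠ 0 := hc.h1ρ.ne'
          congr 1
          field_simp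
          ring

theorem tsum_FB_le (hc : Ctx Ωs N p ρ k ι T) {y : ℝ} (hy : y ∈ Icc (0:ℝ) 1) :
    ∑' ω : List ℕ, ENNReal.ofReal (FB Ωs p k ι T y ω)
      ≤ ENNReal.ofReal (1 - ρ)⁻¹ := by
  rw [ENNReal.tsum_eq_iSup_sum]
  refine iSup_le fun u => ?_
  calc ∑ ω ∈ u, ENNReal.ofReal (FB Ωs p k ι T y ω)
      = ∑ ω ∈ u, (if ω.length ≤ u.sup List.length then
          ENNReal.ofReal (FB Ωs p k ι T y ω) else 0) :=
        Finset.sum_congr rfl fun ω hω => (if_pos (Finset.le_sup hω)).symm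
    _ ≤ ∑' ω : List ℕ, (if ω.length ≤ u.sup List.length then
          ENNReal.ofReal (FB Ωs p k ι T y ω) else 0) := ENNReal.sum_le_tsum u
    _ ≤ _ := hc.cut_bound _ y hy

theorem summable_FB (hc : Ctx Ωs N p ρ k ι T) {y : ℝ} (hy : y ∈ Icc (0:ℝ) 1) :
    Summable (FB Ωs p k ι T y) := by
  have hne : ∑' ω : List ℕ, ENNReal.ofReal (FB Ωs p k ι T y ω) ≠ ⊤ :=
    ((hc.tsum_FB_le hy).trans_lt ENNReal.ofReal_lt_top).ne
  have := ENNReal.summable_toReal hne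
  refine this.congr fun ω => ?_
  exact ENNReal.toReal_ofReal (FB_nonneg hc.hp k ι T y ω)

theorem tsum_FB_le_real (hc : Ctx Ωs N p ρ k ι T) {y : ℝ} (hy : y ∈ Icc (0:ℝ) 1) :
    ∑' ω : List ℕ, FB Ωs p k ι T y ω ≤ (1 - ρ)⁻¹ := by
  rw [← ENNReal.ofReal_le_ofReal_iff (inv_nonneg.2 hc.h1ρ.le),
    ENNReal.ofReal_tsum_of_nonneg (FB_nonneg hc.hp k ι T y) (hc.summable_FB hy)]
  exact hc.tsum_FB_le hy

/-- master domination lemma -/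
theorem dominated {ι' : Type*} (hc : Ctx Ωs N p ρ k ι T) {y : ℝ}
    (hy : y ∈ Icc (0:ℝ) 1) (g : ι' → List ℕ) (hg : Function.Injective g)
    (f : ι' → ℝ) (hf : ∀ i, |f i| ≤ FB Ωs p k ι T y (g i)) :
    Summable f ∧ |∑' i, f i| ≤ (1 - ρ)⁻¹ := by
  have hFBg : Summable (fun i => FB Ωs p k ι T y (g i)) :=
    (hc.summable_FB hy).comp_injective hg
  have habs : Summable fun i => |f i| :=
    hFBg.of_nonneg_of_le (fun i => abs_nonneg _) hf
  refine ⟨habs.of_abs, ?_⟩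
  have hnorm : Summable fun i => ‖f i‖ := by
    simpa only [Real.norm_eq_abs] using habs
  calc |∑' i, f i| ≤ ∑' i, |f i| := by
        have h2 := norm_tsum_le_tsum_norm hnorm
        rw [Real.norm_eq_abs] at h2
        exact h2.trans_eq (tsum_congr fun i => Real.norm_eq_abs _)
    _ ≤ ∑' i, FB Ωs p k ι T y (g i) := Summable.tsum_le_tsum hf habs hFBg
    _ ≤ ∑' ω : List ℕ, FB Ωs p k ι T y ω :=
        Summable.tsum_le_tsum_of_inj g hg (fun ω _ => FB_nonneg hc.hp k ι T y ω)
          (fun i => le_rfl) hFBg (hc.summable_FB hy)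
    _ ≤ (1 - ρ)⁻¹ := hc.tsum_FB_le_real hy

end Ctx


namespace Ctx

variable {Ωs : Set ℕ} {N : ℕ} {p : ℕ → ℝ} {ρ : ℝ} {k : ℕ → ℕ → ℝ}
  {ι : ℝ → ℕ} {T : ℕ → ℝ → ℝ}

theorem ite_rdelta_bound (hc : Ctx Ωs N p ρ k ι T) (ω : Words Ωs) (y : ℝ)
    (c : Prop) [Decidable c] :
    |if c then rdelta p k ι T ω.1 y else 0| ≤ FB Ωs p k ι T y ω.1 := by
  rw [FB, if_pos ω.2]
  split
  · rw [abs_rdelta hc.hp k ι T ω.1 ω.2 y]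
  · simpa using rdeltaA_nonneg hc.hp k ι T ω.1 ω.2 y

theorem summable_ite (hc : Ctx Ωs N p ρ k ι T) {y : ℝ} (hy : y ∈ Icc (0:ℝ) 1)
    (Q : Words Ωs → Prop) [DecidablePred Q] :
    Summable (fun ω : Words Ωs => if Q ω then rdelta p k ι T ω.1 y else 0) ∧
      |∑' ω : Words Ωs, if Q ω then rdelta p k ι T ω.1 y else 0| ≤ (1 - ρ)⁻¹ :=
  hc.dominated hy (fun ω => ω.1) (fun _ _ h => Subtype.ext h) _
    (fun ω : Words Ωs => hc.ite_rdelta_bound ω y (Q ω))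

theorem summable_KI (hc : Ctx Ωs N p ρ k ι T) {y : ℝ} (hy : y ∈ Icc (0:ℝ) 1)
    (n : ℕ) :
    Summable (fun ω : {ω : List ℕ // (∀ j ∈ ω, j ∈ Ωs) ∧ ω ≠ []} =>
        if ι (rwordApply T ω.1.dropLast y) = n then rdelta p k ι T ω.1 y else 0) ∧
      |KI Ωs p k ι T n y| ≤ (1 - ρ)⁻¹ := by
  refine hc.dominated hy (fun ω => ω.1) (fun _ _ h => Subtype.ext h) _ fun ω => ?_
  have : |if ι (rwordApply T ω.1.dropLast y) = n then rdelta p k ι T ω.1 y else 0|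
      ≤ FB Ωs p k ι T y ω.1 := by
    rw [FB, if_pos ω.2.1]
    split
    · rw [abs_rdelta hc.hp k ι T ω.1 ω.2.1 y]
    · simpa using rdeltaA_nonneg hc.hp k ι T ω.1 ω.2.1 y
  exact this

theorem KB_bound (hc : Ctx Ωs N p ρ k ι T) {y : ℝ} (hy : y ∈ Icc (0:ℝ) 1)
    (i : ℕ) : |KB Ωs p k ι T i y| ≤ (1 - ρ)⁻¹ := by
  classical
  exact (hc.summable_ite hy fun ω : Words Ωs => i < ι (rwordApply T ω.1 y)).2

theorem Lfun_bound (hc : Ctx Ωs N p ρ k ι T) {y : ℝ} (hy : y ∈ Icc (0:ℝ) 1)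
    (x : ℝ) : |Lfun Ωs p k ι T y x| ≤ (1 - ρ)⁻¹ := by
  classical
  exact (hc.summable_ite hy
    fun ω : Words Ωs => x ∈ Ico (0:ℝ) (rwordApply T ω.1 y)).2

theorem summable_pk (hc : Ctx Ωs N p ρ k ι T) {n : ℕ}
    (hn : n ∈ Finset.Icc 1 N) :
    Summable (fun j : Ωs => p j.1 / k n j.1) := by
  have habs : Summable fun j : Ωs => |p j.1 / k n j.1| :=
    (hc.hA2 n hn).1.congr fun j => by
      rw [abs_div, abs_of_pos (hc.hp _ j.2)]
  exact habs.of_abs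

open Classical in
theorem KI_eq (hc : Ctx Ωs N p ρ k ι T) {n : ℕ} (hn : n ∈ Finset.Icc 1 N)
    {y : ℝ} (hy : y ∈ Icc (0:ℝ) 1) :
    KI Ωs p k ι T n y
      = (∑' ω : Words Ωs,
          if ι (rwordApply T ω.1 y) = n then rdelta p k ι T ω.1 y else 0)
        * Sav Ωs p k n := by
  set u : Words Ωs → ℝ := fun ω =>
    if ι (rwordApply T ω.1 y) = n then rdelta p k ι T ω.1 y else 0 with hu_def
  set v : Ωs → ℝ := fun j => p j.1 / k n j.1 with hv_def
  have hu : Summable u := (hc.summable_ite hy _).1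
  have hv : Summable v := hc.summable_pk hn
  have hun : Summable fun ω => ‖u ω‖ := by
    simpa only [Real.norm_eq_abs] using hu.abs
  have hvn : Summable fun j => ‖v j‖ := by
    simpa only [Real.norm_eq_abs] using hv.abs
  have hprod : Summable fun z : Words Ωs × Ωs => u z.1 * v z.2 :=
    summable_mul_of_summable_norm hun hvn
  have h1 : KI Ωs p k ι T n y = ∑' z : Words Ωs × Ωs, u z.1 * v z.2 := by
    rw [KI, ← (concatEquiv Ωs).tsum_eq
      (fun ω : {ω : List ℕ // (∀ j ∈ ω, j ∈ Ωs) ∧ ω ≠ []} =>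
        if ι (rwordApply T ω.1.dropLast y) = n then rdelta p k ι T ω.1 y else 0)]
    refine tsum_congr fun z => ?_
    obtain ⟨⟨ω, hω⟩, ⟨j, hj⟩⟩ := z
    show (if ι (rwordApply T (ω ++ [j]).dropLast y) = n
        then rdelta p k ι T (ω ++ [j]) y else 0) = _
    rw [List.dropLast_concat]
    by_cases h : ι (rwordApply T ω y) = n
    · rw [if_pos h]
      show rdelta p k ι T (ω ++ [j]) y
        = (if ι (rwordApply T ω y) = n then rdelta p k ι T ω y else 0) * (p j / k n j)
      rw [if_pos h, rdelta_concat, h]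
    · rw [if_neg h]
      show (0:ℝ) = (if ι (rwordApply T ω y) = n then rdelta p k ι T ω y else 0)
        * (p j / k n j)
      rw [if_neg h, zero_mul]
  rw [h1, ← Summable.tsum_mul_tsum hu hv hprod]
  rfl

open Classical in
theorem KB_eq (hc : Ctx Ωs N p ρ k ι T)
    (hS : ∀ n ∈ Finset.Icc 1 N, Sav Ωs p k n ≠ 0)
    (ℓ : ℕ) {y : ℝ} (hy : y ∈ Icc (0:ℝ) 1) :
    KB Ωs p k ι T ℓ y
      = ∑ n ∈ Finset.Icc (ℓ+1) N, (Sav Ωs p k n)⁻¹ * KI Ωs p k ι T n y := by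
  have hpt : ∀ ω : Words Ωs,
      (if ℓ < ι (rwordApply T ω.1 y) then rdelta p k ι T ω.1 y else 0)
      = ∑ n ∈ Finset.Icc (ℓ+1) N,
          (if ι (rwordApply T ω.1 y) = n then rdelta p k ι T ω.1 y else 0) := by
    intro ω
    have hw := hc.hι _ (rword_mem_Icc hc.hT ω.1 ω.2 y hy)
    rw [Finset.mem_Icc] at hw
    rw [Finset.sum_ite_eq (Finset.Icc (ℓ+1) N) (ι (rwordApply T ω.1 y))
      (fun _ => rdelta p k ι T ω.1 y)]
    refine if_congr ?_ rfl rfl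
    rw [Finset.mem_Icc]
    omega
  rw [KB, tsum_congr hpt,
    Summable.tsum_finsetSum (fun n _ => (hc.summable_ite hy
      (fun ω : Words Ωs => ι (rwordApply T ω.1 y) = n)).1)]
  refine Finset.sum_congr rfl fun n hn => ?_
  have hn' : n ∈ Finset.Icc 1 N := by
    rw [Finset.mem_Icc] at hn ⊢; omega
  rw [hc.KI_eq hn' hy]
  field_simp
  rw [mul_div_assoc, div_self (hS n hn'), mul_one]

end Ctx


namespace Ctx

variable {Ωs : Set ℕ} {N : ℕ} {p : ℕ → ℝ} {ρ : ℝ} {k : ℕ → ℕ → ℝ}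
  {ι : ℝ → ℕ} {T : ℕ → ℝ → ℝ}

theorem summable_mul_KI (hc : Ctx Ωs N p ρ k ι T) {m : ℕ}
    (hm : m ∈ Finset.Icc 1 N) (n : ℕ) (g : Ωs → ℝ)
    (hg : ∀ j, g j ∈ Icc (0:ℝ) 1) :
    Summable (fun j : Ωs => p j.1 / k m j.1 * KI Ωs p k ι T n (g j)) := by
  have habs : Summable fun j : Ωs => p j.1 / |k m j.1| * (1 - ρ)⁻¹ :=
    (hc.hA2 m hm).1.mul_right _
  refine (habs.of_nonneg_of_le (fun j => abs_nonneg _) fun j => ?_).of_abs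
  rw [abs_mul, abs_div, abs_of_pos (hc.hp _ j.2)]
  exact mul_le_mul le_rfl (hc.summable_KI (hg j) n).2 (abs_nonneg _)
    (div_nonneg (hc.hp _ j.2).le (abs_nonneg _))

theorem summable_mul_KB (hc : Ctx Ωs N p ρ k ι T) {m : ℕ}
    (hm : m ∈ Finset.Icc 1 N) (i : ℕ) (g : Ωs → ℝ)
    (hg : ∀ j, g j ∈ Icc (0:ℝ) 1) :
    Summable (fun j : Ωs => p j.1 / k m j.1 * KB Ωs p k ι T i (g j)) := by
  have habs : Summable fun j : Ωs => p j.1 / |k m j.1| * (1 - ρ)⁻¹ :=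
    (hc.hA2 m hm).1.mul_right _
  refine (habs.of_nonneg_of_le (fun j => abs_nonneg _) fun j => ?_).of_abs
  rw [abs_mul, abs_div, abs_of_pos (hc.hp _ j.2)]
  exact mul_le_mul le_rfl (hc.KB_bound (hg j) i) (abs_nonneg _)
    (div_nonneg (hc.hp _ j.2).le (abs_nonneg _))

open Filter in
theorem Lfun_tendsto (hc : Ctx Ωs N p ρ k ι T) {ℓ : ℕ} {zl : ℝ}
    (hzl : zl ∈ Icc (0:ℝ) 1)
    (hord : ∀ w ∈ Icc (0:ℝ) 1, (ℓ < ι w ↔ zl < w)) {y : ℝ}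
    (hy : y ∈ Icc (0:ℝ) 1) :
    Filter.Tendsto (fun x => Lfun Ωs p k ι T y x) (nhdsWithin zl (Ioi zl))
      (nhds (KB Ωs p k ι T ℓ y)) := by
  classical
  unfold Lfun KB
  refine tendsto_tsum_of_dominated_convergence
    (bound := fun ω : Words Ωs => FB Ωs p k ι T y ω.1)
    ((hc.summable_FB hy).comp_injective fun _ _ h => Subtype.ext h)
    (fun ω => ?_) ?_
  · have hwm : rwordApply T ω.1 y ∈ Icc (0:ℝ) 1 :=
      rword_mem_Icc hc.hT ω.1 ω.2 y hy
    by_cases hlt : zl < rwordApply T ω.1 y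
    · rw [if_pos ((hord _ hwm).2 hlt)]
      refine Filter.Tendsto.congr' ?_ tendsto_const_nhds
      filter_upwards [Ioo_mem_nhdsGT hlt] with x hx
      rw [if_pos (Set.mem_Ico.2 ⟨le_of_lt (lt_of_le_of_lt hzl.1 hx.1), hx.2⟩)]
    · rw [if_neg (fun h => hlt ((hord _ hwm).1 h))]
      refine Filter.Tendsto.congr' ?_ tendsto_const_nhds
      filter_upwards [self_mem_nhdsWithin] with x hx
      rw [eq_comm, if_neg]
      rintro ⟨-, h2⟩
      exact hlt (lt_trans (Set.mem_Ioi.1 hx) h2)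
  · refine Filter.Eventually.of_forall fun x ω => ?_
    rw [Real.norm_eq_abs]
    exact hc.ite_rdelta_bound ω y _

end Ctx

theorem telescope_sum (γ : ℕ → ℝ) (ℓ N : ℕ) (hℓ : 1 ≤ ℓ) (hℓN : ℓ ≤ N - 1)
    (hN2 : 2 ≤ N) :
    ∑ n ∈ Finset.Icc (ℓ+1) N,
      (γ (n-1) - if n ∈ Finset.Icc 1 (N-1) then γ n else 0) = γ ℓ := by
  rw [Finset.sum_sub_distrib]
  have h1 : ∑ n ∈ Finset.Icc (ℓ+1) N, γ (n-1)
      = ∑ i ∈ Finset.Icc ℓ (N-1), γ i := by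
    have himg : Finset.Icc (ℓ+1) N
        = Finset.image (· + 1) (Finset.Icc ℓ (N-1)) := by
      ext x
      simp only [Finset.mem_Icc, Finset.mem_image]
      constructor
      · intro hx; exact ⟨x - 1, ⟨by omega, by omega⟩, by omega⟩
      · rintro ⟨a, ⟨ha1, ha2⟩, rfl⟩; omega
    rw [himg, Finset.sum_image (fun a _ b _ h => by omega)]
    exact Finset.sum_congr rfl fun i _ => by rw [Nat.add_sub_cancel]
  have h2 : ∑ n ∈ Finset.Icc (ℓ+1) N,
      (if n ∈ Finset.Icc 1 (N-1) then γ n else 0)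
      = ∑ n ∈ Finset.Icc (ℓ+1) (N-1), γ n := by
    rw [Finset.sum_ite_mem]
    congr 1
    ext x
    simp only [Finset.mem_inter, Finset.mem_Icc]
    omega
  rw [h1, h2]
  have h3 : Finset.Icc ℓ (N-1) = insert ℓ (Finset.Icc (ℓ+1) (N-1)) := by
    ext x
    simp only [Finset.mem_Icc, Finset.mem_insert]
    omega
  rw [h3, Finset.sum_insert (by simp only [Finset.mem_Icc]; omega)]
  ring


end Aux

/-- if `h_γ` is the `T`-invariant function associated to a solution
`γ` of `Mγ = 0` and each `z_ℓ ∈ I_ℓ`, then the right limit of `h_γ` at `z_ℓ`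
equals `γ_ℓ`; in particular `γ ↦ h_γ` is injective on the null space of `M`. -/
theorem stmt_12 (Ωs : Set ℕ) (N : ℕ) (hN : 2 ≤ N) (p : ℕ → ℝ) (ρ : ℝ)
    (hρ0 : 0 < ρ) (hρ1 : ρ < 1)
    (hp : ∀ j ∈ Ωs, 0 < p j) (hpsum : HasSum (fun j : Ωs => p j.1) 1)
    (k d : ℕ → ℕ → ℝ) (ι : ℝ → ℕ) (z : ℕ → ℝ)
    (hι : ∀ x ∈ Icc (0:ℝ) 1, ι x ∈ Finset.Icc 1 N)
    (hk : ∀ n ∈ Finset.Icc 1 N, ∀ j ∈ Ωs, k n j ≠ 0)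
    (hT : ∀ j ∈ Ωs, ∀ x ∈ Icc (0:ℝ) 1, Tpl k d ι j x ∈ Icc (0:ℝ) 1)
    (hA2 : ∀ n ∈ Finset.Icc 1 N,
      Summable (fun j : Ωs => p j.1 / |k n j.1|) ∧
        ∑' j : Ωs, p j.1 / |k n j.1| ≤ ρ)
    (hS : ∀ n ∈ Finset.Icc 1 N, Sav Ωs p k n ≠ 0)
    (hz : ∀ i ∈ Finset.Icc 1 (N - 1), z i ∈ Icc (0:ℝ) 1)
    (hab : ∀ i ∈ Finset.Icc 1 (N - 1), ∀ j ∈ Ωs,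
      aPt k d z i j ∈ Icc (0:ℝ) 1 ∧ bPt k d z i j ∈ Icc (0:ℝ) 1)
    -- each `z_ℓ` lies in `I_ℓ`, i.e. `I_{ℓ+1} ∪ ⋯ ∪ I_N = (z_ℓ, 1]` inside `[0,1]`
    (hord : ∀ ℓ ∈ Finset.Icc 1 (N - 1), ∀ w ∈ Icc (0:ℝ) 1, (ℓ < ι w ↔ z ℓ < w))
    (γ : ℕ → ℝ)
    (hγ : ∀ n ∈ Finset.Icc 1 N,
      ∑ m ∈ Finset.Icc 1 (N - 1), fundM Ωs p k d ι z n m * γ m = 0) :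
    (∀ ℓ ∈ Finset.Icc 1 (N - 1),
      Filter.Tendsto (hFun Ωs N p k d ι z γ)
        (nhdsWithin (z ℓ) (Ioi (z ℓ))) (nhds (γ ℓ))) ∧
    (hFun Ωs N p k d ι z γ = 0 → ∀ ℓ ∈ Finset.Icc 1 (N - 1), γ ℓ = 0) := by
  classical
  have hc : Ctx Ωs N p ρ k ι (Tpl k d ι) := ⟨hρ0, hρ1, hp, hι, hT, hA2⟩
  have main : ∀ ℓ ∈ Finset.Icc 1 (N - 1),
      Filter.Tendsto (hFun Ωs N p k d ι z γ)
        (nhdsWithin (z ℓ) (Ioi (z ℓ))) (nhds (γ ℓ)) := by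
    intro ℓ hℓ
    have hℓ' := Finset.mem_Icc.1 hℓ
    have hmem : ∀ m ∈ Finset.Icc 1 (N-1),
        m ∈ Finset.Icc 1 N ∧ m + 1 ∈ Finset.Icc 1 N := by
      intro m hm
      rw [Finset.mem_Icc] at hm ⊢
      refine ⟨⟨hm.1, by omega⟩, ?_⟩
      rw [Finset.mem_Icc]; omega
    -- the limiting value of the m-th inner sum
    set V : ℕ → ℝ := fun m => ∑' j : Ωs,
      (p j.1 / k m j.1 * KB Ωs p k ι (Tpl k d ι) ℓ (aPt k d z m j.1) -
       p j.1 / k (m+1) j.1 * KB Ωs p k ι (Tpl k d ι) ℓ (bPt k d z m j.1))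
      with hV
    set W : ℕ → ℕ → ℝ := fun n m => ∑' j : Ωs,
      (p j.1 / k m j.1 * KI Ωs p k ι (Tpl k d ι) n (aPt k d z m j.1) -
       p j.1 / k (m+1) j.1 * KI Ωs p k ι (Tpl k d ι) n (bPt k d z m j.1))
      with hWdef
    have hsa : ∀ m ∈ Finset.Icc 1 (N-1), ∀ n, Summable (fun j : Ωs =>
        p j.1 / k m j.1 * KI Ωs p k ι (Tpl k d ι) n (aPt k d z m j.1)
        - p j.1 / k (m+1) j.1 * KI Ωs p k ι (Tpl k d ι) n (bPt k d z m j.1)) := by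
      intro m hm n
      exact (hc.summable_mul_KI (hmem m hm).1 n _
          (fun j => (hab m hm j.1 j.2).1)).sub
        (hc.summable_mul_KI (hmem m hm).2 n _ (fun j => (hab m hm j.1 j.2).2))
    -- decomposition of the fundamental matrix
    have hfundM : ∀ n ∈ Finset.Icc 1 N, ∀ m ∈ Finset.Icc 1 (N-1),
        fundM Ωs p k d ι z n m
          = ((if n = m then Sav Ωs p k m else 0)
              - (if n = m+1 then Sav Ωs p k (m+1) else 0)) + W n m := by
      intro n hn m hm
      have s1 : Summable (fun j : Ωs => if n = m then p j.1 / k m j.1 else 0) := by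
        by_cases h : n = m
        · simp only [if_pos h]; exact hc.summable_pk (hmem m hm).1
        · simp only [if_neg h]; exact summable_zero
      have s2 : Summable (fun j : Ωs =>
          if n = m+1 then p j.1 / k (m+1) j.1 else 0) := by
        by_cases h : n = m+1
        · simp only [if_pos h]; exact hc.summable_pk (hmem m hm).2
        · simp only [if_neg h]; exact summable_zero
      have s3 := hsa m hm n
      rw [show fundM Ωs p k d ι z n m = ∑' j : Ωs,
          ((if n = m then p j.1 / k m j.1 else 0) -
            (if n = m+1 then p j.1 / k (m+1) j.1 else 0) +
            (p j.1 / k m j.1 * KI Ωs p k ι (Tpl k d ι) n (aPt k d z m j.1) -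
              p j.1 / k (m+1) j.1 * KI Ωs p k ι (Tpl k d ι) n (bPt k d z m j.1)))
          from rfl]
      rw [Summable.tsum_add (s1.sub s2) s3, Summable.tsum_sub s1 s2]
      congr 2
      · by_cases h : n = m
        · simp only [if_pos h]; rfl
        · simp only [if_neg h, tsum_zero]
      · by_cases h : n = m+1
        · simp only [if_pos h]; rfl
        · simp only [if_neg h, tsum_zero]
    -- consequence of M γ = 0
    have hW : ∀ n ∈ Finset.Icc (ℓ+1) N,
        ∑ m ∈ Finset.Icc 1 (N-1), W n m * γ m
          = Sav Ωs p k n * γ (n-1)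
            - (if n ∈ Finset.Icc 1 (N-1) then Sav Ωs p k n * γ n else 0) := by
      intro n hn
      have hnIcc := Finset.mem_Icc.1 hn
      have hn' : n ∈ Finset.Icc 1 N := Finset.mem_Icc.2 ⟨by omega, hnIcc.2⟩
      have h0 := hγ n hn'
      rw [Finset.sum_congr rfl (fun m hm => by rw [hfundM n hn' m hm])] at h0
      rw [Finset.sum_congr rfl (fun m hm =>
        show ((if n = m then Sav Ωs p k m else 0)
            - (if n = m+1 then Sav Ωs p k (m+1) else 0) + W n m) * γ m
          = ((if n = m then Sav Ωs p k m else 0) * γ m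
              - (if n = m+1 then Sav Ωs p k (m+1) else 0) * γ m) + W n m * γ m
          from by ring)] at h0
      rw [Finset.sum_add_distrib, Finset.sum_sub_distrib] at h0
      have e1 : ∑ m ∈ Finset.Icc 1 (N-1), (if n = m then Sav Ωs p k m else 0) * γ m
          = (if n ∈ Finset.Icc 1 (N-1) then Sav Ωs p k n * γ n else 0) := by
        rw [Finset.sum_congr rfl (fun m _ =>
          show (if n = m then Sav Ωs p k m else 0) * γ m
            = (if n = m then Sav Ωs p k m * γ m else 0) from by
              split <;> simp)]
        exact Finset.sum_ite_eq (Finset.Icc 1 (N-1)) n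
          (fun m => Sav Ωs p k m * γ m)
      have e2 : ∑ m ∈ Finset.Icc 1 (N-1),
          (if n = m+1 then Sav Ωs p k (m+1) else 0) * γ m
          = Sav Ωs p k n * γ (n-1) := by
        rw [Finset.sum_eq_single (n-1)
          (fun b _ hb => by rw [if_neg (by omega), zero_mul])
          (fun hnot => absurd (Finset.mem_Icc.2 ⟨by omega, by omega⟩) hnot)]
        rw [if_pos (by omega), show n - 1 + 1 = n from by omega]
      rw [e1, e2] at h0
      linarith
    -- the inner sums in terms of the W's
    have hVm : ∀ m ∈ Finset.Icc 1 (N-1),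
        V m = ∑ n ∈ Finset.Icc (ℓ+1) N, (Sav Ωs p k n)⁻¹ * W n m := by
      intro m hm
      have ptwise : ∀ j : Ωs,
          (p j.1 / k m j.1 * KB Ωs p k ι (Tpl k d ι) ℓ (aPt k d z m j.1) -
           p j.1 / k (m+1) j.1 * KB Ωs p k ι (Tpl k d ι) ℓ (bPt k d z m j.1))
          = ∑ n ∈ Finset.Icc (ℓ+1) N, (Sav Ωs p k n)⁻¹ *
              (p j.1 / k m j.1 * KI Ωs p k ι (Tpl k d ι) n (aPt k d z m j.1) -
               p j.1 / k (m+1) j.1 * KI Ωs p k ι (Tpl k d ι) n (bPt k d z m j.1)) := by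
        intro j
        rw [hc.KB_eq hS ℓ (hab m hm j.1 j.2).1, hc.KB_eq hS ℓ (hab m hm j.1 j.2).2,
          Finset.mul_sum, Finset.mul_sum, ← Finset.sum_sub_distrib]
        exact Finset.sum_congr rfl fun n hn => by ring
      simp only [hV]
      rw [tsum_congr ptwise, Summable.tsum_finsetSum (fun n _ => (hsa m hm n).mul_left _)]
      exact Finset.sum_congr rfl fun n hn => tsum_mul_left
    -- the key algebraic identity
    have hval : ∑ m ∈ Finset.Icc 1 (N-1), γ m * V m = γ ℓ := by
      calc ∑ m ∈ Finset.Icc 1 (N-1), γ m * V m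
          = ∑ m ∈ Finset.Icc 1 (N-1), ∑ n ∈ Finset.Icc (ℓ+1) N,
              γ m * ((Sav Ωs p k n)⁻¹ * W n m) := by
            refine Finset.sum_congr rfl fun m hm => ?_
            rw [hVm m hm, Finset.mul_sum]
        _ = ∑ n ∈ Finset.Icc (ℓ+1) N, ∑ m ∈ Finset.Icc 1 (N-1),
              γ m * ((Sav Ωs p k n)⁻¹ * W n m) := Finset.sum_comm
        _ = ∑ n ∈ Finset.Icc (ℓ+1) N, (Sav Ωs p k n)⁻¹ *
              ∑ m ∈ Finset.Icc 1 (N-1), W n m * γ m := by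
            refine Finset.sum_congr rfl fun n hn => ?_
            rw [Finset.mul_sum]
            exact Finset.sum_congr rfl fun m hm => by ring
        _ = ∑ n ∈ Finset.Icc (ℓ+1) N,
              (γ (n-1) - if n ∈ Finset.Icc 1 (N-1) then γ n else 0) := by
            refine Finset.sum_congr rfl fun n hn => ?_
            rw [hW n hn]
            have hnIcc := Finset.mem_Icc.1 hn
            have hn' : n ∈ Finset.Icc 1 N := Finset.mem_Icc.2 ⟨by omega, hnIcc.2⟩
            have hSn := hS n hn'
            rw [mul_sub]
            congr 1
            · rw [← mul_assoc, inv_mul_cancel₀ hSn, one_mul]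
            · by_cases hcond : n ∈ Finset.Icc 1 (N-1)
              · rw [if_pos hcond, if_pos hcond, ← mul_assoc,
                  inv_mul_cancel₀ hSn, one_mul]
              · rw [if_neg hcond, if_neg hcond, mul_zero]
        _ = γ ℓ := telescope_sum γ ℓ N hℓ'.1 hℓ'.2 hN
    -- the convergence part
    have hEm : ∀ m ∈ Finset.Icc 1 (N-1),
        Filter.Tendsto (fun x => ∑' j : Ωs,
            (p j.1 / k m j.1 * Lfun Ωs p k ι (Tpl k d ι) (aPt k d z m j.1) x -
             p j.1 / k (m+1) j.1 * Lfun Ωs p k ι (Tpl k d ι) (bPt k d z m j.1) x))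
          (nhdsWithin (z ℓ) (Ioi (z ℓ))) (nhds (V m)) := by
      intro m hm
      have tri : ∀ a b : ℝ, |a - b| ≤ |a| + |b| := fun a b => by
        rw [sub_eq_add_neg]
        exact (abs_add_le _ _).trans_eq (by rw [abs_neg])
      simp only [hV]
      refine tendsto_tsum_of_dominated_convergence
        (bound := fun j : Ωs =>
          (p j.1 / |k m j.1| + p j.1 / |k (m+1) j.1|) * (1-ρ)⁻¹)
        (((hc.hA2 m (hmem m hm).1).1.add (hc.hA2 (m+1) (hmem m hm).2).1).mul_right _)
        (fun j => ?_) ?_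
      · exact ((hc.Lfun_tendsto (hz ℓ hℓ) (hord ℓ hℓ)
            (hab m hm j.1 j.2).1).const_mul _).sub
          ((hc.Lfun_tendsto (hz ℓ hℓ) (hord ℓ hℓ)
            (hab m hm j.1 j.2).2).const_mul _)
      · refine Filter.Eventually.of_forall fun x j => ?_
        have h1 : |Lfun Ωs p k ι (Tpl k d ι) (aPt k d z m j.1) x| ≤ (1-ρ)⁻¹ :=
          hc.Lfun_bound (hab m hm j.1 j.2).1 x
        have h2 : |Lfun Ωs p k ι (Tpl k d ι) (bPt k d z m j.1) x| ≤ (1-ρ)⁻¹ :=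
          hc.Lfun_bound (hab m hm j.1 j.2).2 x
        have e1 : |p j.1 / k m j.1| = p j.1 / |k m j.1| := by
          rw [abs_div, abs_of_pos (hp _ j.2)]
        have e2 : |p j.1 / k (m+1) j.1| = p j.1 / |k (m+1) j.1| := by
          rw [abs_div, abs_of_pos (hp _ j.2)]
        rw [Real.norm_eq_abs]
        calc |p j.1 / k m j.1 * Lfun Ωs p k ι (Tpl k d ι) (aPt k d z m j.1) x -
              p j.1 / k (m+1) j.1 * Lfun Ωs p k ι (Tpl k d ι) (bPt k d z m j.1) x|
            ≤ |p j.1 / k m j.1 * Lfun Ωs p k ι (Tpl k d ι) (aPt k d z m j.1) x|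
              + |p j.1 / k (m+1) j.1 * Lfun Ωs p k ι (Tpl k d ι) (bPt k d z m j.1) x| :=
              tri _ _
          _ ≤ p j.1 / |k m j.1| * (1-ρ)⁻¹ + p j.1 / |k (m+1) j.1| * (1-ρ)⁻¹ := by
              rw [abs_mul, abs_mul, e1, e2]
              exact add_le_add
                (mul_le_mul le_rfl h1 (abs_nonneg _)
                  (div_nonneg (hp _ j.2).le (abs_nonneg _)))
                (mul_le_mul le_rfl h2 (abs_nonneg _)
                  (div_nonneg (hp _ j.2).le (abs_nonneg _)))
          _ = (p j.1 / |k m j.1| + p j.1 / |k (m+1) j.1|) * (1-ρ)⁻¹ := by ring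
    have htend : Filter.Tendsto (hFun Ωs N p k d ι z γ)
        (nhdsWithin (z ℓ) (Ioi (z ℓ)))
        (nhds (∑ m ∈ Finset.Icc 1 (N-1), γ m * V m)) := by
      unfold hFun
      exact tendsto_finset_sum _ fun m hm => ((hEm m hm).const_mul (γ m))
    rw [hval] at htend
    exact htend
  refine ⟨main, fun h0 ℓ hℓ => ?_⟩
  have h1 := main ℓ hℓ
  rw [h0] at h1
  exact tendsto_nhds_unique h1 tendsto_const_nhds

end
end

section
/- Let β = (1+√5)/2 and let T₀, T₁ be the lazy and greedy β-transformations on [0,β] (T₁x = βx for x < 1/β, βx−1 otherwise; T₀x = βx for x ≤ 1, βx−1 otherwise), chosen with probabilities p and 1−p. Then the function h(x) = (β²/(1+β²))·((1−p)β·1_{[0,β−1]}(x) + 1_{(β−1,1)}(x) + pβ·1_{[1,β]}(x)) is a fixed point of the random Perron–Frobenius operator: for a.e. x, p·(1/β)·Σ_{y: T₀y=x} h(y) + (1−p)·(1/β)·Σ_{y: T₁y=x} h(y) = h(x). -/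
open Set MeasureTheory

noncomputable section

/-- the golden mean `β = (1+√5)/2`. -/
def gβ : ℝ := (1 + Real.sqrt 5) / 2

/-- the lazy β-transformation on `[0,β]` (for the golden mean,
`z₂ = 1/(β(β−1)) = 1`): `T₀ x = βx` for `x ≤ 1`, `βx − 1` otherwise. -/
def Tlazy (x : ℝ) : ℝ := if x ≤ 1 then gβ * x else gβ * x - 1

/-- the greedy β-transformation on `[0,β]`: `T₁ x = βx` for `x < 1/β`,
`βx − 1` otherwise. -/
def Tgreedy (x : ℝ) : ℝ := if x < 1 / gβ then gβ * x else gβ * x - 1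

/-- the invariant density
`h = (β²/(1+β²))·((1−p)β·1_{[0,β−1]} + 1_{(β−1,1)} + pβ·1_{[1,β]})`. -/
def hGold (p x : ℝ) : ℝ :=
  gβ ^ 2 / (1 + gβ ^ 2) *
    ((1 - p) * gβ * (Icc (0:ℝ) (gβ - 1)).indicator (fun _ => (1:ℝ)) x +
      (Ioo (gβ - 1) 1).indicator (fun _ => (1:ℝ)) x +
      p * gβ * (Icc (1:ℝ) gβ).indicator (fun _ => (1:ℝ)) x)

lemma sqrt5 : Real.sqrt 5 ^ 2 = 5 := Real.sq_sqrt (by norm_num)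

lemma sqrt5_lt : 2 < Real.sqrt 5 ∧ Real.sqrt 5 < 3 := by
  constructor
  · nlinarith [sqrt5, Real.sqrt_nonneg 5]
  · nlinarith [sqrt5, Real.sqrt_nonneg 5]

lemma gβ_sq : gβ ^ 2 = gβ + 1 := by
  unfold gβ; nlinarith [sqrt5]

lemma one_lt_gβ : 1 < gβ := by unfold gβ; nlinarith [sqrt5_lt.1]

lemma gβ_lt_two : gβ < 2 := by unfold gβ; nlinarith [sqrt5_lt.2]

lemma gβ_pos : 0 < gβ := by linarith [one_lt_gβ]

lemma inv_gβ : 1 / gβ = gβ - 1 := by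
  rw [div_eq_iff (ne_of_gt gβ_pos)]
  nlinarith [gβ_sq]

lemma tsum_pair' (f : ℝ → ℝ) {a b : ℝ} (h : a ≠ b) :
    ∑' x : ({a, b} : Set ℝ), f x = f a + f b := by
  rw [tsum_subtype, tsum_eq_sum (s := ({a, b} : Finset ℝ))
    (by intro c hc; apply Set.indicator_of_notMem; simpa using hc)]
  rw [Finset.sum_pair h]
  rw [Set.indicator_of_mem (by simp), Set.indicator_of_mem (by simp)]

-- values of hGold
lemma hGold_A {p x : ℝ} (h0 : 0 ≤ x) (h1 : x ≤ gβ - 1) :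
    hGold p x = gβ ^ 2 / (1 + gβ ^ 2) * ((1 - p) * gβ) := by
  have := one_lt_gβ; have := gβ_lt_two
  unfold hGold
  rw [Set.indicator_of_mem (show x ∈ Icc (0:ℝ) (gβ-1) from ⟨h0, h1⟩),
      Set.indicator_of_notMem (by simp [mem_Ioo]; intro h; linarith),
      Set.indicator_of_notMem (by simp [mem_Icc]; intro h; linarith)]
  ring

lemma hGold_B {p x : ℝ} (h0 : gβ - 1 < x) (h1 : x < 1) :
    hGold p x = gβ ^ 2 / (1 + gβ ^ 2) := by
  unfold hGold
  rw [Set.indicator_of_mem (show x ∈ Ioo (gβ-1) 1 from ⟨h0, h1⟩),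
      Set.indicator_of_notMem (by simp [mem_Icc]; intro h; linarith),
      Set.indicator_of_notMem (by simp [mem_Icc]; intro h; linarith)]
  ring

lemma hGold_C {p x : ℝ} (h0 : 1 ≤ x) (h1 : x ≤ gβ) :
    hGold p x = gβ ^ 2 / (1 + gβ ^ 2) * (p * gβ) := by
  have := gβ_lt_two
  unfold hGold
  rw [Set.indicator_of_mem (show x ∈ Icc (1:ℝ) gβ from ⟨h0, h1⟩),
      Set.indicator_of_notMem (by simp [mem_Icc]; intro h; linarith),
      Set.indicator_of_notMem (by simp [mem_Ioo]; intro h; linarith)]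
  ring

-- fibers
lemma lazy_fiber_low {x : ℝ} (h0 : 0 < x) (h1 : x < gβ - 1) :
    {y : ℝ | y ∈ Icc (0:ℝ) gβ ∧ Tlazy y = x} = {x / gβ} := by
  have hb := gβ_pos; have hb1 := one_lt_gβ; have hsq := gβ_sq
  ext y
  simp only [mem_setOf_eq, mem_Icc, mem_singleton_iff, Tlazy]
  constructor
  · rintro ⟨⟨hy0, hy1⟩, heq⟩
    split_ifs at heq with h
    · field_simp; linarith
    · push_neg at h; nlinarith
  · rintro rfl
    have hxb : x / gβ ≤ 1 := by rw [div_le_one hb]; nlinarith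
    refine ⟨⟨by positivity, by rw [div_le_iff₀ hb]; nlinarith⟩, ?_⟩
    rw [if_pos hxb]; field_simp
lemma lazy_fiber_high {x : ℝ} (h0 : gβ - 1 < x) (h1 : x < gβ) :
    {y : ℝ | y ∈ Icc (0:ℝ) gβ ∧ Tlazy y = x} = {x / gβ, (x + 1) / gβ} := by
  have hb := gβ_pos; have hb1 := one_lt_gβ; have hsq := gβ_sq
  have hx0 : 0 < x := by nlinarith
  ext y
  simp only [mem_setOf_eq, mem_Icc, mem_singleton_iff, mem_insert_iff, Tlazy]
  constructor
  · rintro ⟨⟨hy0, hy1⟩, heq⟩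
    split_ifs at heq with h
    · left; field_simp; linarith
    · right; field_simp; linarith
  · rintro (rfl | rfl)
    · have hxb : x / gβ ≤ 1 := by rw [div_le_one hb]; nlinarith
      refine ⟨⟨by positivity, ?_⟩, ?_⟩
      · rw [div_le_iff₀ hb]; nlinarith
      · rw [if_pos hxb]; field_simp
    · have hxb : ¬ ((x + 1) / gβ ≤ 1) := by
        rw [not_le, lt_div_iff₀ hb]; nlinarith
      refine ⟨⟨by positivity, ?_⟩, ?_⟩
      · rw [div_le_iff₀ hb]; nlinarith
      · rw [if_neg hxb]; field_simp; ring

lemma greedy_fiber_low {x : ℝ} (h0 : 0 < x) (h1 : x < 1) :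
    {y : ℝ | y ∈ Icc (0:ℝ) gβ ∧ Tgreedy y = x} = {x / gβ, (x + 1) / gβ} := by
  have hb := gβ_pos; have hb1 := one_lt_gβ; have hsq := gβ_sq
  ext y
  simp only [mem_setOf_eq, mem_Icc, mem_singleton_iff, mem_insert_iff, Tgreedy]
  constructor
  · rintro ⟨⟨hy0, hy1⟩, heq⟩
    split_ifs at heq with h
    · left; field_simp; linarith
    · right; field_simp; linarith
  · rintro (rfl | rfl)
    · refine ⟨⟨by positivity, ?_⟩, ?_⟩
      · rw [div_le_iff₀ hb]; nlinarith
      · rw [if_pos (by rw [div_lt_div_iff₀ hb hb]; nlinarith)]; field_simp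
    · have hxb : ¬ ((x + 1) / gβ < 1 / gβ) := by
        rw [not_lt, div_le_div_iff₀ hb hb]; nlinarith
      refine ⟨⟨by positivity, ?_⟩, ?_⟩
      · rw [div_le_iff₀ hb]; nlinarith
      · rw [if_neg hxb]; field_simp; ring

lemma greedy_fiber_high {x : ℝ} (h0 : 1 < x) (h1 : x < gβ) :
    {y : ℝ | y ∈ Icc (0:ℝ) gβ ∧ Tgreedy y = x} = {(x + 1) / gβ} := by
  have hb := gβ_pos; have hb1 := one_lt_gβ; have hsq := gβ_sq
  ext y
  simp only [mem_setOf_eq, mem_Icc, mem_singleton_iff, Tgreedy]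
  constructor
  · rintro ⟨⟨hy0, hy1⟩, heq⟩
    split_ifs at heq with h
    · exfalso; rw [lt_div_iff₀ hb] at h; nlinarith
    · field_simp; linarith
  · rintro rfl
    have hxb : ¬ ((x + 1) / gβ < 1 / gβ) := by
      rw [not_lt, div_le_div_iff₀ hb hb]; nlinarith
    refine ⟨⟨by positivity, ?_⟩, ?_⟩
    · rw [div_le_iff₀ hb]; nlinarith
    · rw [if_neg hxb]; field_simp; ring

lemma tsum_set_congr (f : ℝ → ℝ) {S T : Set ℝ} (h : S = T) :
    ∑' y : S, f y = ∑' y : T, f y := by rw [h]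

/-- for the golden mean `β`, the function `h` above is a fixed
point of the random Perron–Frobenius operator of the random lazy/greedy
β-system with probabilities `p` and `1−p`. -/
theorem stmt_15 (p : ℝ) (hp : p ∈ Icc (0:ℝ) 1) :
    ∀ᵐ x ∂(volume.restrict (Icc (0:ℝ) gβ)),
      p * (1 / gβ) * (∑' y : {y : ℝ // y ∈ Icc (0:ℝ) gβ ∧ Tlazy y = x}, hGold p y.1) +
        (1 - p) * (1 / gβ) *
          (∑' y : {y : ℝ // y ∈ Icc (0:ℝ) gβ ∧ Tgreedy y = x}, hGold p y.1) =
      hGold p x := by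
  have hb := gβ_pos; have hb1 := one_lt_gβ; have hb2 := gβ_lt_two; have hsq := gβ_sq
  have hfin : ({0, gβ - 1, 1, gβ} : Set ℝ).Finite := Set.toFinite _
  have hvol : (volume : Measure ℝ) ({0, gβ - 1, 1, gβ} : Set ℝ) = 0 :=
    hfin.measure_zero _
  have hae : ∀ᵐ x ∂(volume : Measure ℝ), x ∉ ({0, gβ - 1, 1, gβ} : Set ℝ) := by
    rw [ae_iff]
    have he : {a : ℝ | ¬ a ∉ ({0, gβ - 1, 1, gβ} : Set ℝ)} = {0, gβ - 1, 1, gβ} := by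
      ext a; simp; tauto
    rw [he]; exact hvol
  filter_upwards [ae_restrict_mem measurableSet_Icc, ae_restrict_of_ae hae]
    with x hx hx2
  simp only [mem_insert_iff, mem_singleton_iff, not_or] at hx2
  obtain ⟨hne0, hneb1, hne1, hneb⟩ := hx2
  obtain ⟨hx0, hxb⟩ := hx
  have hx0' : 0 < x := lt_of_le_of_ne hx0 (Ne.symm hne0)
  have hxb' : x < gβ := lt_of_le_of_ne hxb hneb
  rw [inv_gβ]
  have hnepair : x / gβ ≠ (x + 1) / gβ := by
    intro h
    rw [div_eq_div_iff (ne_of_gt hb) (ne_of_gt hb)] at h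
    nlinarith
  set c := gβ ^ 2 / (1 + gβ ^ 2) with hc
  rcases lt_trichotomy x (gβ - 1) with h1 | h1 | h1
  · -- x ∈ (0, β-1)
    have e1 : (∑' y : {y : ℝ // y ∈ Icc (0:ℝ) gβ ∧ Tlazy y = x}, hGold p y.1)
        = hGold p (x / gβ) :=
      (tsum_set_congr (fun y => hGold p y) (lazy_fiber_low hx0' h1)).trans
        (tsum_singleton _ _)
    have e2 : (∑' y : {y : ℝ // y ∈ Icc (0:ℝ) gβ ∧ Tgreedy y = x}, hGold p y.1)
        = hGold p (x / gβ) + hGold p ((x + 1) / gβ) :=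
      (tsum_set_congr (fun y => hGold p y)
        (greedy_fiber_low hx0' (by linarith))).trans (tsum_pair' _ hnepair)
    rw [e1, e2,
      hGold_A (p := p) (by positivity) (by rw [div_le_iff₀ hb]; nlinarith),
      hGold_B (p := p) (by rw [lt_div_iff₀ hb]; nlinarith)
        (by rw [div_lt_one hb]; nlinarith),
      hGold_A (p := p) (le_of_lt hx0') (le_of_lt h1)]
    linear_combination c * (1 - p) * hsq
  · exact absurd h1 hneb1
  · rcases lt_trichotomy x 1 with h2 | h2 | h2
    · -- x ∈ (β-1, 1)
      have e1 : (∑' y : {y : ℝ // y ∈ Icc (0:ℝ) gβ ∧ Tlazy y = x}, hGold p y.1)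
          = hGold p (x / gβ) + hGold p ((x + 1) / gβ) :=
        (tsum_set_congr (fun y => hGold p y)
          (lazy_fiber_high h1 hxb')).trans (tsum_pair' _ hnepair)
      have e2 : (∑' y : {y : ℝ // y ∈ Icc (0:ℝ) gβ ∧ Tgreedy y = x}, hGold p y.1)
          = hGold p (x / gβ) + hGold p ((x + 1) / gβ) :=
        (tsum_set_congr (fun y => hGold p y)
          (greedy_fiber_low hx0' h2)).trans (tsum_pair' _ hnepair)
      rw [e1, e2,
        hGold_A (p := p) (by positivity) (by rw [div_le_iff₀ hb]; nlinarith),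
        hGold_C (p := p) (by rw [le_div_iff₀ hb]; nlinarith)
          (by rw [div_le_iff₀ hb]; nlinarith),
        hGold_B (p := p) h1 h2]
      linear_combination c * hsq
    · exact absurd h2 hne1
    · -- x ∈ (1, β)
      have e1 : (∑' y : {y : ℝ // y ∈ Icc (0:ℝ) gβ ∧ Tlazy y = x}, hGold p y.1)
          = hGold p (x / gβ) + hGold p ((x + 1) / gβ) :=
        (tsum_set_congr (fun y => hGold p y)
          (lazy_fiber_high h1 hxb')).trans (tsum_pair' _ hnepair)
      have e2 : (∑' y : {y : ℝ // y ∈ Icc (0:ℝ) gβ ∧ Tgreedy y = x}, hGold p y.1)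
          = hGold p ((x + 1) / gβ) :=
        (tsum_set_congr (fun y => hGold p y)
          (greedy_fiber_high h2 hxb')).trans (tsum_singleton _ _)
      rw [e1, e2,
        hGold_B (p := p) (by rw [lt_div_iff₀ hb]; nlinarith)
          (by rw [div_lt_one hb]; nlinarith),
        hGold_C (p := p) (by rw [le_div_iff₀ hb]; nlinarith)
          (by rw [div_le_iff₀ hb]; nlinarith),
        hGold_C (p := p) (le_of_lt h2) hxb]
      linear_combination c * p * hsq

end
end

section
/- Let β = (1+√5)/2 and consider the random golden-mean β-system T₀ (lazy) and T₁ (greedy) with probabilities p and 1−p. Then KI₃(1) = pβ²/(β² − p(1−p)), where KI₃(y) is the total weighted mass of visits of the random orbit of y to the interval I₃ = (1, β]. -/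
open Set

noncomputable section

/-- the lazy β-transformation for the golden mean (`z₂ = 1/(β(β−1)) = 1`). -/
def T0 (β x : ℝ) : ℝ := if x ≤ 1 then β * x else β * x - 1

/-- the greedy β-transformation. -/
def T1 (β x : ℝ) : ℝ := if x < 1 / β then β * x else β * x - 1

/-- `T_b` with `b = false ↦ T₀` (probability `p`), `b = true ↦ T₁`
(probability `1−p`). -/
def Tb (β : ℝ) : Bool → ℝ → ℝ
  | false => T0 β
  | true => T1 β

/-- `T_ω = T_{ω_t} ∘ ⋯ ∘ T_{ω_1}`. -/
def wApply (β : ℝ) : List Bool → ℝ → ℝ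
  | [], y => y
  | b :: ω, y => wApply β ω (Tb β b y)

/-- `p_{ω_1} ⋯ p_{ω_t}` with `p₀ = p`, `p₁ = 1−p`. -/
def wWeight (p : ℝ) : List Bool → ℝ
  | [] => 1
  | b :: ω => (if b then 1 - p else p) * wWeight p ω

/-- `KI₃(y) = Σ_{t≥1} Σ_{ω∈{0,1}ᵗ} δ_ω(y,t)·1_{I₃}(T_{ω₁^{t−1}}(y))` with
`I₃ = (1, β]` and `δ_ω(y,t) = Π p_{ω_n}/β` (all slopes equal `β`). -/
def KI3 (β p y : ℝ) : ℝ :=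
  ∑' ω : {ω : List Bool // ω ≠ []},
    if 1 < wApply β ω.1.dropLast y ∧ wApply β ω.1.dropLast y ≤ β then
      wWeight p ω.1 / β ^ ω.1.length
    else 0

namespace Stmt16

lemma wApply_nil (β y : ℝ) : wApply β [] y = y := rfl
lemma wApply_cons (β : ℝ) (b : Bool) (l : List Bool) (y : ℝ) :
    wApply β (b :: l) y = wApply β l (Tb β b y) := rfl

lemma wApply_append (β : ℝ) (l1 l2 : List Bool) (y : ℝ) :
    wApply β (l1 ++ l2) y = wApply β l2 (wApply β l1 y) := by
  induction l1 generalizing y with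
  | nil => rfl
  | cons b l ih => simp [wApply_cons, ih]

lemma wWeight_cons (p : ℝ) (b : Bool) (l : List Bool) :
    wWeight p (b :: l) = (if b then 1 - p else p) * wWeight p l := rfl

lemma wWeight_append (p : ℝ) (l1 l2 : List Bool) :
    wWeight p (l1 ++ l2) = wWeight p l1 * wWeight p l2 := by
  induction l1 with
  | nil => simp [wWeight]
  | cons b l ih => simp [wWeight_cons, ih]; ring

lemma wWeight_nonneg {p : ℝ} (hp0 : 0 ≤ p) (hp1 : p ≤ 1) (l : List Bool) :
    0 ≤ wWeight p l := by
  induction l with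
  | nil => norm_num [wWeight]
  | cons b l ih =>
    refine mul_nonneg ?_ ih
    cases b <;> simp <;> linarith

/-- the escaping prefix `(t f)^k f`. -/
def pat : ℕ → List Bool
  | 0 => [false]
  | k + 1 => true :: false :: pat k

lemma pat_length (k : ℕ) : (pat k).length = 2 * k + 1 := by
  induction k with
  | zero => rfl
  | succ k ih => simp [pat, ih]; ring

lemma pat_wWeight (p : ℝ) (k : ℕ) :
    wWeight p (pat k) = p ^ (k + 1) * (1 - p) ^ k := by
  induction k with
  | zero => simp [pat, wWeight]
  | succ k ih => simp [pat, wWeight_cons, ih]; ring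

lemma pat_append_inj : ∀ k k' (ρ ρ' : List Bool),
    pat k ++ ρ = pat k' ++ ρ' → k = k' ∧ ρ = ρ' := by
  intro k
  induction k with
  | zero =>
    intro k' ρ ρ' h
    cases k' with
    | zero => simpa [pat] using h
    | succ k' => simp [pat] at h
  | succ k ih =>
    intro k' ρ ρ' h
    cases k' with
    | zero => simp [pat] at h
    | succ k' =>
      simp only [pat, List.cons_append, List.cons.injEq, true_and] at h
      obtain ⟨hk, hρ⟩ := ih k' ρ ρ' h
      exact ⟨by omega, hρ⟩

lemma sum_wWeight {p : ℝ} (hp0 : 0 ≤ p) (hp1 : p ≤ 1) :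
    ∀ n : ℕ, ∑ v : Fin n → Bool, wWeight p (List.ofFn v) = 1 := by
  intro n
  induction n with
  | zero => simp [wWeight]
  | succ n ih =>
    rw [← ((Fin.consEquiv (fun _ : Fin (n + 1) => Bool)).sum_comp
      (fun v => wWeight p (List.ofFn v)))]
    have : ∀ x : Bool × (Fin n → Bool),
        wWeight p (List.ofFn ((Fin.consEquiv (fun _ : Fin (n + 1) => Bool)) x))
          = (if x.1 then 1 - p else p) * wWeight p (List.ofFn x.2) := by
      rintro ⟨b, w⟩
      simp [Fin.consEquiv, List.ofFn_succ, wWeight_cons]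
    rw [Finset.sum_congr rfl (fun x _ => this x)]
    rw [Fintype.sum_prod_type]
    have h2 : ∀ b : Bool, ∑ w : Fin n → Bool,
        (if b then 1 - p else p) * wWeight p (List.ofFn w)
          = (if b then 1 - p else p) := by
      intro b; rw [← Finset.mul_sum, ih, mul_one]
    rw [Finset.sum_congr rfl (fun b _ => h2 b), Fintype.sum_bool]
    simp

section beta

variable {β : ℝ} (hβ1 : 1 < β) (hβ2 : β * β = β + 1)

include hβ1 hβ2

lemma hβlt2 : β < 2 := by nlinarith

lemma βinv : 1 / β = β - 1 := by
  rw [div_eq_iff (by linarith : β ≠ 0)]; nlinarith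

lemma Tb_beta (b : Bool) : Tb β b β = β := by
  have h2 : β < 2 := hβlt2 hβ1 hβ2
  have hi : 1 / β = β - 1 := βinv hβ1 hβ2
  cases b
  · show T0 β β = β
    rw [T0, if_neg (by linarith)]; nlinarith
  · show T1 β β = β
    rw [T1, hi, if_neg (by linarith)]; nlinarith

lemma wApply_beta (ρ : List Bool) : wApply β ρ β = β := by
  induction ρ with
  | nil => rfl
  | cons b l ih => rw [wApply_cons, Tb_beta hβ1 hβ2, ih]

lemma Tb_zero (b : Bool) : Tb β b 0 = 0 := by
  have hi : 1 / β = β - 1 := βinv hβ1 hβ2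
  cases b
  · show T0 β 0 = 0
    rw [T0, if_pos (by norm_num)]; ring
  · show T1 β 0 = 0
    rw [T1, hi, if_pos (by linarith)]; ring

lemma wApply_zero (ρ : List Bool) : wApply β ρ 0 = 0 := by
  induction ρ with
  | nil => rfl
  | cons b l ih => rw [wApply_cons, Tb_zero hβ1 hβ2, ih]

lemma T0_one : T0 β 1 = β := by simp [T0]

lemma T1_one : T1 β 1 = β - 1 := by
  have hi : 1 / β = β - 1 := βinv hβ1 hβ2
  rw [T1, hi, if_neg (by linarith [hβlt2 hβ1 hβ2])]; ring

lemma T0_bm1 : T0 β (β - 1) = 1 := by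
  rw [T0, if_pos (by linarith [hβlt2 hβ1 hβ2])]; nlinarith

lemma T1_bm1 : T1 β (β - 1) = 0 := by
  have hi : 1 / β = β - 1 := βinv hβ1 hβ2
  rw [T1, hi, if_neg (by linarith)]; nlinarith

lemma wApply_pat (k : ℕ) : wApply β (pat k) 1 = β := by
  induction k with
  | zero =>
    show wApply β [false] 1 = β
    rw [wApply_cons, wApply_nil]
    exact T0_one hβ1 hβ2
  | succ k ih =>
    show wApply β (true :: false :: pat k) 1 = β
    rw [wApply_cons, wApply_cons]
    show wApply β (pat k) (T0 β (T1 β 1)) = β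
    rw [T1_one hβ1 hβ2, T0_bm1 hβ1 hβ2]
    exact ih

lemma reach : ∀ σ : List Bool, 1 < wApply β σ 1 → ∃ k ρ, σ = pat k ++ ρ
  | [] => by intro h; rw [wApply_nil] at h; linarith
  | false :: σ' => fun _ => ⟨0, σ', rfl⟩
  | [true] => by
    intro h
    rw [wApply_cons, wApply_nil] at h
    have : Tb β true 1 = β - 1 := T1_one hβ1 hβ2
    rw [this] at h
    linarith [hβlt2 hβ1 hβ2]
  | true :: true :: σ'' => by
    intro h
    rw [wApply_cons, wApply_cons] at h
    have h1 : Tb β true 1 = β - 1 := T1_one hβ1 hβ2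
    have h2 : Tb β true (β - 1) = 0 := T1_bm1 hβ1 hβ2
    rw [h1, h2, wApply_zero hβ1 hβ2] at h
    linarith
  | true :: false :: σ'' => by
    intro h
    rw [wApply_cons, wApply_cons] at h
    have h1 : Tb β true 1 = β - 1 := T1_one hβ1 hβ2
    have h2 : Tb β false (β - 1) = 1 := T0_bm1 hβ1 hβ2
    rw [h1, h2] at h
    obtain ⟨k, ρ, hkρ⟩ := reach σ'' h
    exact ⟨k + 1, ρ, by simp [pat, hkρ]⟩

end beta

/-- the nonempty lists are the lists with a designated last element. -/
def eLast : {ω : List Bool // ω ≠ []} ≃ List Bool × Bool where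
  toFun ω := (ω.1.dropLast, ω.1.getLast ω.2)
  invFun x := ⟨x.1 ++ [x.2], by simp⟩
  left_inv ω := Subtype.ext (List.dropLast_append_getLast ω.2)
  right_inv x := by
    obtain ⟨σ, b⟩ := x
    simp [List.dropLast_concat, List.getLast_concat]

lemma key {β p : ℝ} (hβ1 : 1 < β) (hβ2 : β * β = β + 1)
    (hp0 : 0 ≤ p) (hp1 : p ≤ 1) :
    KI3 β p 1 = p * β ^ 2 / (β ^ 2 - p * (1 - p)) := by
  have hβ0 : (0:ℝ) < β := by linarith
  have hq0 : (0:ℝ) ≤ 1 - p := by linarith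
  have hwnn := wWeight_nonneg hp0 hp1
  have hβne : β ≠ 0 := ne_of_gt hβ0
  -- the ENNReal-valued summands
  set G : {ω : List Bool // ω ≠ []} → ENNReal := fun ω =>
    if 1 < wApply β ω.1.dropLast 1 ∧ wApply β ω.1.dropLast 1 ≤ β then
      ENNReal.ofReal (wWeight p ω.1 / β ^ ω.1.length) else 0 with hG
  set H : List Bool → ENNReal := fun σ =>
    if 1 < wApply β σ 1 ∧ wApply β σ 1 ≤ β then
      ENNReal.ofReal (wWeight p σ / β ^ (σ.length + 1)) else 0 with hH
  have hGtop : ∀ ω, G ω ≠ ⊤ := by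
    intro ω; rw [hG]; dsimp only; split
    · exact ENNReal.ofReal_ne_top
    · exact ENNReal.zero_ne_top
  -- Step 1 : KI3 is the toReal of the ENNReal sum
  have step1 : KI3 β p 1 = (∑' ω, G ω).toReal := by
    rw [KI3, ENNReal.tsum_toReal_eq hGtop]
    refine tsum_congr fun ω => ?_
    rw [hG]; dsimp only; split
    · rw [ENNReal.toReal_ofReal (div_nonneg (hwnn _) (by positivity))]
    · simp
  -- Step 2 : reindex by (dropLast, getLast), then sum over the last bit
  have step2 : ∑' ω, G ω = ∑' σ : List Bool, H σ := by
    rw [← Equiv.tsum_eq eLast.symm G, ENNReal.tsum_prod']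
    refine tsum_congr fun σ => ?_
    rw [tsum_bool]
    have hval : ∀ b : Bool, G (eLast.symm (σ, b)) =
        if 1 < wApply β σ 1 ∧ wApply β σ 1 ≤ β then
          ENNReal.ofReal (wWeight p (σ ++ [b]) / β ^ (σ.length + 1)) else 0 := by
      intro b
      rw [hG]
      simp [eLast, List.dropLast_concat]
    rw [hval, hval, hH]
    dsimp only
    split
    · rw [← ENNReal.ofReal_add (div_nonneg (hwnn _) (by positivity))
        (div_nonneg (hwnn _) (by positivity)), ← add_div]
      congr 2
      simp [wWeight_append, wWeight_cons, wWeight]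
      ring
    · simp
  -- Step 3 : restrict to the support, parametrized by ℕ × List Bool
  have hinj : Function.Injective (fun x : ℕ × List Bool => pat x.1 ++ x.2) := by
    rintro ⟨k, ρ⟩ ⟨k', ρ'⟩ h
    obtain ⟨h1, h2⟩ := pat_append_inj k k' ρ ρ' h
    simp [h1, h2]
  have hsupp : Function.support H ⊆
      Set.range (fun x : ℕ × List Bool => pat x.1 ++ x.2) := by
    intro σ hσ
    rw [Function.mem_support, hH] at hσ
    dsimp only at hσ
    by_cases hc : 1 < wApply β σ 1 ∧ wApply β σ 1 ≤ β
    · obtain ⟨k, ρ, hkρ⟩ := reach hβ1 hβ2 σ hc.1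
      exact ⟨(k, ρ), hkρ.symm⟩
    · exact absurd (if_neg hc) hσ
  have step3 : ∑' σ : List Bool, H σ =
      ∑' x : ℕ × List Bool, H (pat x.1 ++ x.2) :=
    (hinj.tsum_eq hsupp).symm
  -- Step 4 : evaluate the terms on the support
  have hterm : ∀ (k : ℕ) (ρ : List Bool), H (pat k ++ ρ) =
      ENNReal.ofReal (p / β ^ 2 * (p * (1 - p) / β ^ 2) ^ k) *
        ENNReal.ofReal (wWeight p ρ / β ^ ρ.length) := by
    intro k ρ
    have hcond : wApply β (pat k ++ ρ) 1 = β := by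
      rw [wApply_append, wApply_pat hβ1 hβ2, wApply_beta hβ1 hβ2]
    rw [hH]
    dsimp only
    rw [if_pos (by rw [hcond]; exact ⟨hβ1, le_refl β⟩)]
    rw [← ENNReal.ofReal_mul (by positivity)]
    congr 1
    rw [wWeight_append, pat_wWeight, List.length_append, pat_length]
    have hpow : (p * (1 - p) / β ^ 2) ^ k = p ^ k * (1 - p) ^ k / β ^ (2 * k) := by
      rw [div_pow, mul_pow, ← pow_mul]
    rw [hpow]
    field_simp
    ring
  -- Step 5 : sum the double geometric series
  have hA : (∑' ρ : List Bool, ENNReal.ofReal (wWeight p ρ / β ^ ρ.length)) =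
      (1 - ENNReal.ofReal β⁻¹)⁻¹ := by
    rw [← Equiv.tsum_eq List.equivSigmaTuple.symm
      (fun ρ : List Bool => ENNReal.ofReal (wWeight p ρ / β ^ ρ.length)),
      ENNReal.tsum_sigma']
    have hn : ∀ n : ℕ, (∑' v : Fin n → Bool,
        ENNReal.ofReal (wWeight p (List.ofFn v) / β ^ (List.ofFn v).length))
        = ENNReal.ofReal β⁻¹ ^ n := by
      intro n
      rw [tsum_fintype]
      rw [← ENNReal.ofReal_sum_of_nonneg
        (fun v _ => div_nonneg (hwnn _) (by positivity))]
      have : ∑ v : Fin n → Bool, wWeight p (List.ofFn v) / β ^ (List.ofFn v).length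
          = (∑ v : Fin n → Bool, wWeight p (List.ofFn v)) / β ^ n := by
        simp only [List.length_ofFn]
        rw [← Finset.sum_div]
      rw [this, sum_wWeight hp0 hp1 n, ← ENNReal.ofReal_pow (by positivity)]
      congr 1
      rw [inv_pow]
      field_simp
    calc (∑' (n : ℕ) (v : Fin n → Bool),
          ENNReal.ofReal (wWeight p (List.ofFn v) / β ^ (List.ofFn v).length))
        = ∑' n : ℕ, ENNReal.ofReal β⁻¹ ^ n := tsum_congr hn
      _ = (1 - ENNReal.ofReal β⁻¹)⁻¹ := ENNReal.tsum_geometric _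
  have step5 : (∑' x : ℕ × List Bool, H (pat x.1 ++ x.2)) =
      ENNReal.ofReal (p / β ^ 2) *
        (1 - ENNReal.ofReal (p * (1 - p) / β ^ 2))⁻¹ *
        (1 - ENNReal.ofReal β⁻¹)⁻¹ := by
    rw [ENNReal.tsum_prod']
    calc (∑' (k : ℕ) (ρ : List Bool), H (pat k ++ ρ))
        = ∑' k : ℕ, ENNReal.ofReal (p / β ^ 2 * (p * (1 - p) / β ^ 2) ^ k) *
            (1 - ENNReal.ofReal β⁻¹)⁻¹ := by
          refine tsum_congr fun k => ?_
          rw [tsum_congr (fun ρ => hterm k ρ), ENNReal.tsum_mul_left, hA]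
      _ = (∑' k : ℕ, ENNReal.ofReal (p / β ^ 2) *
            ENNReal.ofReal (p * (1 - p) / β ^ 2) ^ k) *
            (1 - ENNReal.ofReal β⁻¹)⁻¹ := by
          rw [ENNReal.tsum_mul_right]
          congr 1
          refine tsum_congr fun k => ?_
          rw [ENNReal.ofReal_mul (by positivity), ENNReal.ofReal_pow (by positivity)]
      _ = ENNReal.ofReal (p / β ^ 2) *
            (1 - ENNReal.ofReal (p * (1 - p) / β ^ 2))⁻¹ *
            (1 - ENNReal.ofReal β⁻¹)⁻¹ := by
          rw [ENNReal.tsum_mul_left, ENNReal.tsum_geometric]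
  -- Step 6 : take toReal and do real arithmetic
  have hβ2pos : (1:ℝ) < β ^ 2 := by nlinarith
  have hr1 : p * (1 - p) / β ^ 2 ≤ 1 := by
    rw [div_le_one (by positivity)]
    nlinarith
  have hβi1 : β⁻¹ ≤ 1 := by
    rw [inv_le_one_iff₀]; right; linarith
  rw [step1, step2, step3, step5]
  rw [← ENNReal.ofReal_one, ← ENNReal.ofReal_sub _ (by positivity),
    ← ENNReal.ofReal_sub _ (by positivity)]
  rw [ENNReal.toReal_mul, ENNReal.toReal_mul, ENNReal.toReal_inv, ENNReal.toReal_inv]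
  rw [ENNReal.toReal_ofReal (by positivity),
    ENNReal.toReal_ofReal (by linarith),
    ENNReal.toReal_ofReal (by linarith)]
  have hd1 : (0:ℝ) < 1 - p * (1 - p) / β ^ 2 := by
    rw [sub_pos, div_lt_one (by positivity)]
    nlinarith
  have hd2 : (0:ℝ) < 1 - β⁻¹ := by
    rw [sub_pos, inv_lt_one_iff₀]; right; linarith
  have hd3 : (0:ℝ) < β ^ 2 - p * (1 - p) := by nlinarith
  have e1 : (1 - β⁻¹)⁻¹ = β ^ 2 := by
    refine inv_eq_of_mul_eq_one_right ?_
    field_simp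
    nlinarith
  have e2 : (1 - p * (1 - p) / β ^ 2)⁻¹ = β ^ 2 / (β ^ 2 - p * (1 - p)) := by
    rw [one_sub_div (by positivity : (β:ℝ) ^ 2 ≠ 0), inv_div]
  rw [e1, e2]
  field_simp

end Stmt16

/-- for the golden mean `β` and the random lazy/greedy system with
probabilities `p, 1−p`, one has `KI₃(1) = pβ²/(β² − p(1−p))`. -/
theorem stmt_16 (β p : ℝ) (hβ : β = (1 + Real.sqrt 5) / 2) (hp : p ∈ Icc (0:ℝ) 1) :
    KI3 β p 1 = p * β ^ 2 / (β ^ 2 - p * (1 - p)) := by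
  obtain ⟨hp0, hp1⟩ := hp
  have hs : Real.sqrt 5 ^ 2 = 5 := Real.sq_sqrt (by norm_num)
  have hs1 : 1 < Real.sqrt 5 := by nlinarith [Real.sqrt_nonneg 5]
  have hβ1 : 1 < β := by rw [hβ]; linarith
  have hβ2 : β * β = β + 1 := by rw [hβ]; nlinarith
  exact Stmt16.key hβ1 hβ2 hp0 hp1

end
end
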